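/- Let λ₁, …, λ_N ∈ ℂ and q > 0 such that |λ₁| = q^{1/2}·(1+ε) for some ε > 0. Then the sequence νₙ = ∑_{i=1}^N λ_iⁿ is not O(q^{n/2}): for every constant C > 0 there exist infinitely many n with |νₙ| > C·q^{n/2}. -/

import Mathlib

open Polynomial Finset

/-- If `|l 0| = √q (1+ε)` with `ε > 0`, then `νₙ = ∑ i (l i)ⁿ` is not `O(q^{n/2})`. -/
theorem not_bigO_of_eigenvalue_off_line (N : ℕ) (l : Fin (N + 1) → ℂ)
    (q : ℝ) (hq : 0 < q) (ε : ℝ) (hε : 0 < ε)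
    (h1 : ‖l 0‖ = Real.sqrt q * (1 + ε)) :
    ∀ C : ℝ, 0 < C →
      {n : ℕ | C * Real.sqrt q ^ n < ‖∑ i, l i ^ n‖}.Infinite := by
  intro C hC
  by_contra hfin
  rw [Set.not_infinite] at hfin
  obtain ⟨m, hm⟩ := hfin.bddAbove
  have hbound : ∀ n : ℕ, m < n →
      ‖∑ i, l i ^ n‖ ≤ C * Real.sqrt q ^ n := by
    intro n hn
    by_contra h
    exact absurd (hm (not_le.1 h)) (not_le.2 hn)
  set T : Finset ℂ := (Finset.univ.image l).erase (l 0) with hT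
  set P : Polynomial ℂ := ∏ μ ∈ T, (X - Polynomial.C μ) with hP
  set d : ℕ := P.natDegree with hd
  have hE : P.eval (l 0) ≠ 0 := by
    rw [hP, eval_prod]
    rw [Finset.prod_ne_zero_iff]
    intro μ hμ
    simp only [eval_sub, eval_X, eval_C]
    exact sub_ne_zero.2 fun h => (Finset.mem_erase.1 hμ).1 h.symm
  set K : ℕ := (Finset.univ.filter (fun i => l i = l 0)).card with hK
  have hKpos : 0 < K := Finset.card_pos.2 ⟨0, by simp⟩
  have key : ∀ n : ℕ, ∑ s ∈ Finset.range (d + 1), P.coeff s * (∑ i, l i ^ (n + s))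
      = (K : ℂ) * P.eval (l 0) * l 0 ^ n := by
    intro n
    have step1 : ∑ s ∈ Finset.range (d + 1), P.coeff s * (∑ i, l i ^ (n + s))
        = ∑ i, l i ^ n * P.eval (l i) := by
      simp_rw [Finset.mul_sum]
      rw [Finset.sum_comm]
      refine Finset.sum_congr rfl fun i _ => ?_
      rw [eval_eq_sum_range, Finset.mul_sum]
      refine Finset.sum_congr rfl fun s _ => ?_
      rw [pow_add]; ring
    rw [step1, ← Finset.sum_filter_add_sum_filter_not Finset.univ (fun i => l i = l 0)]
    have h2 : ∑ i ∈ Finset.univ.filter (fun i => ¬ l i = l 0),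
        l i ^ n * P.eval (l i) = 0 := by
      refine Finset.sum_eq_zero fun i hi => ?_
      have hiT : l i ∈ T := Finset.mem_erase.2 ⟨(Finset.mem_filter.1 hi).2,
        Finset.mem_image_of_mem l (Finset.mem_univ i)⟩
      have : P.eval (l i) = 0 := by
        rw [hP, eval_prod]
        exact Finset.prod_eq_zero hiT (by simp)
      rw [this, mul_zero]
    rw [h2, add_zero]
    rw [Finset.sum_congr rfl (fun i hi => by
      rw [(Finset.mem_filter.1 hi).2])]
    rw [Finset.sum_const, hK, nsmul_eq_mul]
    ring
  set A : ℝ := ∑ s ∈ Finset.range (d + 1), ‖P.coeff s‖ * Real.sqrt q ^ s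
    with hA
  set c : ℝ := ‖(K : ℂ) * P.eval (l 0)‖ with hc
  have hcpos : 0 < c := by
    rw [hc]
    exact norm_pos_iff.mpr (mul_ne_zero (Nat.cast_ne_zero.2 hKpos.ne') hE)
  have hsq : 0 < Real.sqrt q := Real.sqrt_pos.2 hq
  have main : ∀ n : ℕ, m < n → c * (1 + ε) ^ n ≤ C * A := by
    intro n hn
    have h3 : c * ‖l 0‖ ^ n
        = ‖∑ s ∈ Finset.range (d + 1), P.coeff s * (∑ i, l i ^ (n + s))‖ := by
      rw [key n, norm_mul, norm_pow]
    have h4 : ‖∑ s ∈ Finset.range (d + 1), P.coeff s * (∑ i, l i ^ (n + s))‖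
        ≤ ∑ s ∈ Finset.range (d + 1), ‖P.coeff s‖ * (C * Real.sqrt q ^ (n + s)) := by
      refine le_trans (norm_sum_le _ _) ?_
      refine Finset.sum_le_sum fun s _ => ?_
      rw [norm_mul]
      refine mul_le_mul_of_nonneg_left ?_ (norm_nonneg _)
      exact hbound (n + s) (lt_of_lt_of_le hn (Nat.le_add_right n s))
    have h5 : ∑ s ∈ Finset.range (d + 1), ‖P.coeff s‖ * (C * Real.sqrt q ^ (n + s))
        = C * Real.sqrt q ^ n * A := by
      rw [hA, Finset.mul_sum]
      refine Finset.sum_congr rfl fun s _ => ?_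
      rw [pow_add]; ring
    have h6 : c * ‖l 0‖ ^ n ≤ C * Real.sqrt q ^ n * A := by
      rw [h3]; rw [← h5] at *; exact le_trans (le_of_eq rfl) (h5 ▸ (h4.trans_eq h5))
    rw [h1, mul_pow] at h6
    have := (mul_le_mul_iff_of_pos_right (pow_pos hsq n)).mp (by linarith [h6] : c * (1 + ε) ^ n * Real.sqrt q ^ n ≤ C * A * Real.sqrt q ^ n)
    exact this
  -- contradiction: (1+ε)^n unbounded
  obtain ⟨n, hn⟩ := pow_unbounded_of_one_lt (C * A / c) (by linarith : (1:ℝ) < 1 + ε)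
  have hmono : (1 + ε) ^ n ≤ (1 + ε) ^ (max n (m + 1)) :=
    pow_le_pow_right₀ (by linarith) (le_max_left _ _)
  have := main (max n (m + 1)) (lt_of_lt_of_le (Nat.lt_succ_self m) (le_max_right _ _))
  have : C * A / c < C * A / c := by
    calc C * A / c < (1 + ε) ^ n := hn
      _ ≤ (1 + ε) ^ (max n (m + 1)) := hmono
      _ ≤ C * A / c := by
          rw [le_div_iff₀ hcpos]; linarith [this]
  exact lt_irrefl _ this
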